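/- Let D be a division ring, Γ₀ a linearly ordered commutative group with zero, and v : D → Γ₀ a valuation (i.e. v(xy) = v(x)v(y), v(x+y) ≤ max(v(x), v(y)), v(1) = 1, v(0) = 0). Let k be a positive integer such that v(k·1_D) = 1. Then every x ∈ D with v(x − 1) < 1 and x^k = 1 satisfies x = 1. -/
import Mathlib


/-- If `k` is a positive integer whose image in `D` is a valuation unit
(`v (k : D) = 1`), then every element of `1 + M` which is a `k`-th root of unity
is trivial. -/
theorem one_add_maximalIdeal_no_torsion {D : Type*} [DivisionRing D] {Γ₀ : Type*}
    [LinearOrderedCommGroupWithZero Γ₀] (v : Valuation D Γ₀)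
    (k : ℕ) (hk : 0 < k) (hkv : v (k : D) = 1) :
    ∀ x : D, v (x - 1) < 1 → x ^ k = 1 → x = 1 := by
  intro x hx hxk
  have hvx : v x = 1 := by
    have := v.map_one_add_of_lt (x := x - 1) hx
    simpa using this
  have hvpow : ∀ i : ℕ, v (x ^ i) = 1 := fun i => by
    rw [v.map_pow, hvx, one_pow]
  have hsumle : ∀ n : ℕ, v (∑ i ∈ Finset.range n, x ^ i) ≤ 1 := fun n => by
    apply v.map_sum_le
    intro i _
    exact (hvpow i).le
  have hxi : ∀ i : ℕ, v (x ^ i - 1) < 1 := fun i => by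
    have : x ^ i - 1 = (∑ j ∈ Finset.range i, x ^ j) * (x - 1) := (geom_sum_mul x i).symm
    rw [this, v.map_mul]
    calc v (∑ j ∈ Finset.range i, x ^ j) * v (x - 1) ≤ 1 * v (x - 1) :=
          mul_le_mul_left (hsumle i) _
      _ = v (x - 1) := one_mul _
      _ < 1 := hx
  set S : D := ∑ i ∈ Finset.range k, x ^ i with hS
  have hSk : v (S - (k : D)) < 1 := by
    have : S - (k : D) = ∑ i ∈ Finset.range k, (x ^ i - 1) := by
      rw [Finset.sum_sub_distrib]
      simp [hS]
    rw [this]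
    exact v.map_sum_lt one_ne_zero fun i _ => hxi i
  have hvS : v S = 1 := by
    have : v S = v (k : D) := by
      have := Valuation.map_add_eq_of_lt_right v (x := S - (k : D)) (y := (k : D))
        (by rw [hkv]; exact hSk)
      simpa using this
    rw [this, hkv]
  have hSne : S ≠ 0 := fun h => by simp [h] at hvS
  have h0 : S * (x - 1) = 0 := by
    rw [geom_sum_mul, hxk, sub_self]
  rcases mul_eq_zero.mp h0 with h | h
  · exact absurd h hSne
  · exact sub_eq_zero.mp h
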